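/- Let X be a real random variable with a distribution measure μ such that Pr{|X| ≥ t} ≤ 2·exp(-N t² / (4c(c+t))) for all t > 0, where c > 0 and N ≥ 1. Then for all real z with |z| < N/(16c), E[e^{zX}] ≤ √(32π)·√(c²z²/N)·exp(2c²z²/N) + 3·e^{|z|/√N} + 2·exp(-N/16). -/

import Mathlib

open MeasureTheory Real Set

lemma aux_interval_int (a x : ℝ) :
    ∫ t in (0:ℝ)..x, a * Real.exp (a * t) = Real.exp (a * x) - 1 := by
  have h : ∀ t ∈ Set.uIcc (0:ℝ) x, HasDerivAt (fun u => Real.exp (a * u)) (a * Real.exp (a * t)) t := by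
    intro t _
    have := ((hasDerivAt_id t).const_mul a).exp
    simpa [mul_comm] using this
  rw [intervalIntegral.integral_eq_sub_of_hasDerivAt h
    ((Continuous.intervalIntegrable (by continuity) _ _))]
  simp

lemma aux_exp_Ioi (a : ℝ) (ha : 0 < a) : ∫ t in Ioi (0:ℝ), Real.exp (-(a * t)) = a⁻¹ := by
  have := integral_comp_mul_left_Ioi (fun x => Real.exp (-x)) 0 ha
  simp only [mul_zero] at this
  rw [show (fun t => Real.exp (-(a*t))) = (fun t => (fun x => Real.exp (-x)) (a * t)) from rfl]
  rw [this, integral_exp_neg_Ioi_zero, smul_eq_mul, mul_one]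

set_option maxHeartbeats 2000000 in
/-- If a real random variable `X` satisfies the tail bound
`Pr{|X| ≥ t} ≤ 2 exp (-N t² / (4 c (c + t)))` for all `t > 0` (with `c > 0`, `N ≥ 1`),
then for `|z| < N / (16 c)`,
`E[e^{zX}] ≤ √(32π) √(c² z² / N) exp (2 c² z² / N) + 3 e^{|z|/√N} + 2 exp (-N/16)`. -/
theorem mgf_bound_from_tail {Ω : Type*} [MeasurableSpace Ω]
    (μ : Measure Ω) [IsProbabilityMeasure μ] (X : Ω → ℝ) (hX : Measurable X)
    (c N : ℝ) (hc : 0 < c) (hN : 1 ≤ N)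
    (htail : ∀ t : ℝ, 0 < t →
      μ {ω | t ≤ |X ω|} ≤ ENNReal.ofReal (2 * Real.exp (-(N * t ^ 2) / (4 * c * (c + t)))))
    (z : ℝ) (hz : |z| < N / (16 * c)) :
    ∫ ω, Real.exp (z * X ω) ∂μ ≤
      Real.sqrt (32 * Real.pi) * Real.sqrt (c ^ 2 * z ^ 2 / N) *
          Real.exp (2 * (c ^ 2 * z ^ 2 / N))
        + 3 * Real.exp (|z| / Real.sqrt N) + 2 * Real.exp (-(N / 16)) := by
  have hN0 : (0:ℝ) < N := lt_of_lt_of_le one_pos hN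
  have hRHS1 : 0 ≤ Real.sqrt (32 * Real.pi) * Real.sqrt (c ^ 2 * z ^ 2 / N) *
      Real.exp (2 * (c ^ 2 * z ^ 2 / N)) := by positivity
  have hRHS3 : 0 ≤ 2 * Real.exp (-(N / 16)) := by positivity
  have hexp3 : (3:ℝ) ≤ 3 * Real.exp (|z| / Real.sqrt N) := by
    nlinarith [Real.one_le_exp (by positivity : (0:ℝ) ≤ |z| / Real.sqrt N)]
  rcases eq_or_ne z 0 with hz0 | hz0
  · subst hz0
    simp only [zero_mul, Real.exp_zero, integral_const, measure_univ, ENNReal.toReal_one, probReal_univ,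
      one_smul, smul_eq_mul, mul_one]
    linarith
  -- notation
  set a : ℝ := |z| with ha_def
  have ha : 0 < a := abs_pos.mpr hz0
  set K : ℝ := 2 * a ^ 2 * c ^ 2 / N with hK_def
  set t₀ : ℝ := 4 * a * c ^ 2 / N with ht₀_def
  set b : ℝ := N / (8 * c ^ 2) with hb_def
  have hb : 0 < b := by positivity
  -- step: integral = toReal of lintegral
  have hmeas : Measurable fun ω => Real.exp (z * X ω) := (hX.const_mul z).exp
  rw [integral_eq_lintegral_of_nonneg_ae
      (Filter.Eventually.of_forall fun ω => (Real.exp_pos _).le)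
      hmeas.aestronglyMeasurable]
  -- pointwise: exp (z X) ≤ exp (a |X|)
  have step1 : ∫⁻ ω, ENNReal.ofReal (Real.exp (z * X ω)) ∂μ ≤
      ∫⁻ ω, ENNReal.ofReal (Real.exp (a * |X ω|)) ∂μ := by
    refine lintegral_mono fun ω => ENNReal.ofReal_le_ofReal (Real.exp_le_exp.mpr ?_)
    calc z * X ω ≤ |z * X ω| := le_abs_self _
      _ = a * |X ω| := abs_mul _ _
  -- step: ≤ layercake + 1
  have step2 : ∫⁻ ω, ENNReal.ofReal (Real.exp (a * |X ω|)) ∂μ ≤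
      (∫⁻ ω, ENNReal.ofReal (Real.exp (a * |X ω|) - 1) ∂μ) + 1 := by
    calc ∫⁻ ω, ENNReal.ofReal (Real.exp (a * |X ω|)) ∂μ
        ≤ ∫⁻ ω, (ENNReal.ofReal (Real.exp (a * |X ω|) - 1) + 1) ∂μ := by
          refine lintegral_mono fun ω => ?_
          have h1 : Real.exp (a * |X ω|) = (Real.exp (a * |X ω|) - 1) + 1 := by ring
          rw [h1]
          simpa using ENNReal.ofReal_add_le (p := Real.exp (a * |X ω|) - 1) (q := 1)
      _ = (∫⁻ ω, ENNReal.ofReal (Real.exp (a * |X ω|) - 1) ∂μ) + 1 := by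
          rw [lintegral_add_right _ measurable_const, lintegral_const, measure_univ, mul_one]
  -- layercake
  have hlayer : ∫⁻ ω, ENNReal.ofReal (Real.exp (a * |X ω|) - 1) ∂μ =
      ∫⁻ t in Ioi (0:ℝ), μ {ω | t ≤ |X ω|} * ENNReal.ofReal (a * Real.exp (a * t)) := by
    have := lintegral_comp_eq_lintegral_meas_le_mul (f := fun ω => |X ω|)
      (g := fun t => a * Real.exp (a * t)) μ
      (Filter.Eventually.of_forall fun ω => abs_nonneg _)
      (hX.abs.aemeasurable)
      (fun t _ => Continuous.intervalIntegrable (by continuity) _ _)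
      (Filter.Eventually.of_forall fun t => by positivity)
    simp_rw [aux_interval_int] at this
    exact this
  -- bound tail integrand
  have step3 : ∫⁻ t in Ioi (0:ℝ), μ {ω | t ≤ |X ω|} * ENNReal.ofReal (a * Real.exp (a * t)) ≤
      ∫⁻ t in Ioi (0:ℝ), ENNReal.ofReal (2 * a * Real.exp K * Real.exp (-b * (t - t₀) ^ 2)
        + 2 * a * Real.exp (-(a * t))) := by
    have hmb : Measurable fun t : ℝ => ENNReal.ofReal (2 * a * Real.exp K * Real.exp (-b * (t - t₀) ^ 2)
        + 2 * a * Real.exp (-(a * t))) := by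
      apply Measurable.ennreal_ofReal
      apply Continuous.measurable
      fun_prop
    refine setLIntegral_mono hmb fun t ht => ?_
    have ht' : (0:ℝ) < t := ht
    calc μ {ω | t ≤ |X ω|} * ENNReal.ofReal (a * Real.exp (a * t))
        ≤ ENNReal.ofReal (2 * Real.exp (-(N * t ^ 2) / (4 * c * (c + t)))) *
            ENNReal.ofReal (a * Real.exp (a * t)) :=
          mul_le_mul_left (htail t ht') _
      _ = ENNReal.ofReal (2 * Real.exp (-(N * t ^ 2) / (4 * c * (c + t))) *
            (a * Real.exp (a * t))) := (ENNReal.ofReal_mul (by positivity)).symm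
      _ ≤ ENNReal.ofReal (2 * a * Real.exp K * Real.exp (-b * (t - t₀) ^ 2)
            + 2 * a * Real.exp (-(a * t))) := by
          refine ENNReal.ofReal_le_ofReal ?_
          have hkey : 2 * Real.exp (-(N * t ^ 2) / (4 * c * (c + t))) * (a * Real.exp (a * t))
              = 2 * a * Real.exp (a * t - N * t ^ 2 / (4 * c * (c + t))) := by
            rw [sub_eq_add_neg, Real.exp_add]
            ring_nf
          rw [hkey]
          rcases le_or_gt t c with htc | htc
          · -- small t: Gaussian part dominates
            have hden : 4 * c * (c + t) ≤ 8 * c ^ 2 := by nlinarith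
            have hφ : N * t ^ 2 / (8 * c ^ 2) ≤ N * t ^ 2 / (4 * c * (c + t)) := by
              apply div_le_div_of_nonneg_left (by positivity) (by positivity) hden
            have hNne : N ≠ 0 := ne_of_gt hN0
            have hcne : c ≠ 0 := ne_of_gt hc
            have hsq : a * t - N * t ^ 2 / (8 * c ^ 2) = K + (-b * (t - t₀) ^ 2) := by
              rw [hK_def, ht₀_def, hb_def]
              field_simp
              ring
            have : a * t - N * t ^ 2 / (4 * c * (c + t)) ≤ K + (-b * (t - t₀) ^ 2) := by
              rw [← hsq]; linarith
            have h2 : 2 * a * Real.exp (a * t - N * t ^ 2 / (4 * c * (c + t)))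
                ≤ 2 * a * Real.exp (K + (-b * (t - t₀) ^ 2)) :=
              mul_le_mul_of_nonneg_left (Real.exp_le_exp.mpr this) (by positivity)
            rw [Real.exp_add] at h2
            have h4 : (0:ℝ) ≤ 2 * a * Real.exp (-(a * t)) := by positivity
            have h5 : 2 * a * Real.exp K * Real.exp (-b * (t - t₀) ^ 2)
                = 2 * a * (Real.exp K * Real.exp (-b * (t - t₀) ^ 2)) := by ring
            linarith
          · -- large t: exponential part dominates
            have hden : 4 * c * (c + t) ≤ 8 * c * t := by nlinarith
            have hφ : N * t ^ 2 / (8 * c * t) ≤ N * t ^ 2 / (4 * c * (c + t)) := by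
              apply div_le_div_of_nonneg_left (by positivity) (by positivity) hden
            have h8 : N * t ^ 2 / (8 * c * t) = N * t / (8 * c) := by
              field_simp
            have hat : 2 * (a * t) ≤ N * t / (8 * c) := by
              have h16 : a * (16 * c) ≤ N := (le_div_iff₀ (by positivity)).mp (le_of_lt hz)
              rw [le_div_iff₀ (by positivity : (0:ℝ) < 8 * c)]
              have h17 := mul_le_mul_of_nonneg_right h16 ht'.le
              linarith
            have harg : a * t - N * t ^ 2 / (4 * c * (c + t)) ≤ -(a * t) := by
              rw [h8] at hφ; linarith
            have h2 : 2 * a * Real.exp (a * t - N * t ^ 2 / (4 * c * (c + t)))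
                ≤ 2 * a * Real.exp (-(a * t)) :=
              mul_le_mul_of_nonneg_left (Real.exp_le_exp.mpr harg) (by positivity)
            have hA : (0:ℝ) ≤ 2 * a * Real.exp K * Real.exp (-b * (t - t₀) ^ 2) := by positivity
            linarith
  -- split the sum and evaluate the two integrals
  have hint1 : Integrable (fun t : ℝ => 2 * a * Real.exp K * Real.exp (-b * (t - t₀) ^ 2)) := by
    exact ((integrable_exp_neg_mul_sq hb).comp_sub_right t₀).const_mul _
  have hval1 : ∫ t : ℝ, 2 * a * Real.exp K * Real.exp (-b * (t - t₀) ^ 2)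
      = 2 * a * Real.exp K * Real.sqrt (Real.pi / b) := by
    rw [integral_const_mul]
    congr 1
    rw [show (fun t : ℝ => Real.exp (-b * (t - t₀) ^ 2))
        = (fun t : ℝ => (fun u : ℝ => Real.exp (-b * u ^ 2)) (t - t₀)) from rfl]
    rw [integral_sub_right_eq_self (fun u : ℝ => Real.exp (-b * u ^ 2)) t₀]
    exact integral_gaussian b
  have hint2 : IntegrableOn (fun t : ℝ => 2 * a * Real.exp (-(a * t))) (Ioi 0) := by
    have := exp_neg_integrableOn_Ioi 0 ha
    simpa [neg_mul, IntegrableOn] using this.const_mul (2 * a)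
  have hval2 : ∫ t in Ioi (0:ℝ), 2 * a * Real.exp (-(a * t)) = 2 := by
    rw [integral_const_mul, aux_exp_Ioi a ha]
    field_simp
  have step4 : ∫⁻ t in Ioi (0:ℝ), ENNReal.ofReal (2 * a * Real.exp K * Real.exp (-b * (t - t₀) ^ 2)
        + 2 * a * Real.exp (-(a * t)))
      ≤ ENNReal.ofReal (2 * a * Real.exp K * Real.sqrt (Real.pi / b)) + ENNReal.ofReal 2 := by
    calc ∫⁻ t in Ioi (0:ℝ), ENNReal.ofReal (2 * a * Real.exp K * Real.exp (-b * (t - t₀) ^ 2)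
          + 2 * a * Real.exp (-(a * t)))
        ≤ ∫⁻ t in Ioi (0:ℝ), (ENNReal.ofReal (2 * a * Real.exp K * Real.exp (-b * (t - t₀) ^ 2))
            + ENNReal.ofReal (2 * a * Real.exp (-(a * t)))) := by
          exact lintegral_mono fun t => ENNReal.ofReal_add_le
      _ = (∫⁻ t in Ioi (0:ℝ), ENNReal.ofReal (2 * a * Real.exp K * Real.exp (-b * (t - t₀) ^ 2)))
            + ∫⁻ t in Ioi (0:ℝ), ENNReal.ofReal (2 * a * Real.exp (-(a * t))) := by
          rw [lintegral_add_left (by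
            apply Measurable.ennreal_ofReal
            apply Continuous.measurable
            fun_prop)]
      _ ≤ (∫⁻ t : ℝ, ENNReal.ofReal (2 * a * Real.exp K * Real.exp (-b * (t - t₀) ^ 2)))
            + ∫⁻ t in Ioi (0:ℝ), ENNReal.ofReal (2 * a * Real.exp (-(a * t))) := by
          gcongr
          exact Measure.restrict_le_self
      _ = ENNReal.ofReal (2 * a * Real.exp K * Real.sqrt (Real.pi / b)) + ENNReal.ofReal 2 := by
          have e1 : ∫⁻ t : ℝ, ENNReal.ofReal (2 * a * Real.exp K * Real.exp (-b * (t - t₀) ^ 2))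
              = ENNReal.ofReal (2 * a * Real.exp K * Real.sqrt (Real.pi / b)) := by
            rw [← ofReal_integral_eq_lintegral_ofReal hint1
              (Filter.Eventually.of_forall fun t => by positivity), hval1]
          have e2 : ∫⁻ t in Ioi (0:ℝ), ENNReal.ofReal (2 * a * Real.exp (-(a * t)))
              = ENNReal.ofReal 2 := by
            rw [← ofReal_integral_eq_lintegral_ofReal hint2
              (Filter.Eventually.of_forall fun t => by positivity), hval2]
          rw [e1, e2]
  -- combine
  have htot : ∫⁻ ω, ENNReal.ofReal (Real.exp (z * X ω)) ∂μ ≤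
      ENNReal.ofReal (2 * a * Real.exp K * Real.sqrt (Real.pi / b)) + ENNReal.ofReal 2 + 1 := by
    calc ∫⁻ ω, ENNReal.ofReal (Real.exp (z * X ω)) ∂μ
        ≤ ∫⁻ ω, ENNReal.ofReal (Real.exp (a * |X ω|)) ∂μ := step1
      _ ≤ (∫⁻ ω, ENNReal.ofReal (Real.exp (a * |X ω|) - 1) ∂μ) + 1 := step2
      _ = (∫⁻ t in Ioi (0:ℝ), μ {ω | t ≤ |X ω|} * ENNReal.ofReal (a * Real.exp (a * t))) + 1 := by
          rw [hlayer]
      _ ≤ (∫⁻ t in Ioi (0:ℝ), ENNReal.ofReal (2 * a * Real.exp K * Real.exp (-b * (t - t₀) ^ 2)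
            + 2 * a * Real.exp (-(a * t)))) + 1 := add_le_add_left step3 1
      _ ≤ ENNReal.ofReal (2 * a * Real.exp K * Real.sqrt (Real.pi / b)) + ENNReal.ofReal 2 + 1 :=
          add_le_add_left step4 1
  -- to real
  have hfin : (ENNReal.ofReal (2 * a * Real.exp K * Real.sqrt (Real.pi / b)) + ENNReal.ofReal 2
      + 1).toReal = 2 * a * Real.exp K * Real.sqrt (Real.pi / b) + 2 + 1 := by
    rw [ENNReal.toReal_add (ENNReal.add_ne_top.mpr ⟨ENNReal.ofReal_ne_top, ENNReal.ofReal_ne_top⟩)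
        ENNReal.one_ne_top,
      ENNReal.toReal_add ENNReal.ofReal_ne_top ENNReal.ofReal_ne_top, ENNReal.toReal_one,
      ENNReal.toReal_ofReal (by positivity :
        (0:ℝ) ≤ 2 * a * Real.exp K * Real.sqrt (Real.pi / b)),
      ENNReal.toReal_ofReal (by norm_num : (0:ℝ) ≤ 2)]
  have hle : (∫⁻ ω, ENNReal.ofReal (Real.exp (z * X ω)) ∂μ).toReal ≤
      2 * a * Real.exp K * Real.sqrt (Real.pi / b) + 2 + 1 := by
    rw [← hfin]
    exact ENNReal.toReal_mono (ENNReal.add_ne_top.mpr ⟨ENNReal.add_ne_top.mpr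
      ⟨ENNReal.ofReal_ne_top, ENNReal.ofReal_ne_top⟩, ENNReal.one_ne_top⟩) htot
  refine hle.trans ?_
  -- final arithmetic
  have hcoef : 2 * a * Real.sqrt (Real.pi / b) =
      Real.sqrt (32 * Real.pi) * Real.sqrt (c ^ 2 * z ^ 2 / N) := by
    have hsq : (2 * a * Real.sqrt (Real.pi / b)) ^ 2
        = (Real.sqrt (32 * Real.pi) * Real.sqrt (c ^ 2 * z ^ 2 / N)) ^ 2 := by
      simp only [mul_pow]
      rw [Real.sq_sqrt (by positivity : (0:ℝ) ≤ Real.pi / b),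
        Real.sq_sqrt (by positivity : (0:ℝ) ≤ 32 * Real.pi),
        Real.sq_sqrt (by positivity : (0:ℝ) ≤ c ^ 2 * z ^ 2 / N),
        hb_def, ha_def, sq_abs]
      have hNne : N ≠ 0 := ne_of_gt hN0
      have hcne : c ≠ 0 := ne_of_gt hc
      field_simp
      ring
    calc 2 * a * Real.sqrt (Real.pi / b)
        = Real.sqrt ((2 * a * Real.sqrt (Real.pi / b)) ^ 2) :=
          (Real.sqrt_sq (by positivity)).symm
      _ = Real.sqrt ((Real.sqrt (32 * Real.pi) * Real.sqrt (c ^ 2 * z ^ 2 / N)) ^ 2) := by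
          rw [hsq]
      _ = Real.sqrt (32 * Real.pi) * Real.sqrt (c ^ 2 * z ^ 2 / N) :=
          Real.sqrt_sq (by positivity)
  have hKeq : K = 2 * (c ^ 2 * z ^ 2 / N) := by
    rw [hK_def, sq_abs]; ring
  rw [hKeq]
  calc 2 * a * Real.exp (2 * (c ^ 2 * z ^ 2 / N)) * Real.sqrt (Real.pi / b) + 2 + 1
      = 2 * a * Real.sqrt (Real.pi / b) * Real.exp (2 * (c ^ 2 * z ^ 2 / N)) + 3 := by ring
    _ = Real.sqrt (32 * Real.pi) * Real.sqrt (c ^ 2 * z ^ 2 / N) *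
          Real.exp (2 * (c ^ 2 * z ^ 2 / N)) + 3 := by rw [hcoef]
    _ ≤ Real.sqrt (32 * Real.pi) * Real.sqrt (c ^ 2 * z ^ 2 / N) *
          Real.exp (2 * (c ^ 2 * z ^ 2 / N)) + 3 * Real.exp (|z| / Real.sqrt N)
          + 2 * Real.exp (-(N / 16)) := by linarith
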